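/- arXiv:1705.09675 — 4 statements merged into one kernel-verified Lean document; each statement's English description precedes it below -/
import Mathlib

section
/- For probability density functions P and Q on a measurable space X, the Fisher IPM over the space of all square-integrable functions with respect to (P+Q)/2, defined as sup over nonzero f of (E_P[f] - E_Q[f]) / sqrt((1/2)E_P[f^2] + (1/2)E_Q[f^2]), equals the symmetric chi-squared distance chi_2(P,Q) = sqrt(∫ (P(x)-Q(x))^2 / ((P(x)+Q(x))/2) dx). -/
open MeasureTheory

theorem my_integral_cs {X : Type*} [MeasurableSpace X] (μ : Measure X) (u v : X → ℝ)
    (hu : AEStronglyMeasurable u μ) (hv : AEStronglyMeasurable v μ)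
    (hu2 : Integrable (fun x => u x ^ 2) μ) (hv2 : Integrable (fun x => v x ^ 2) μ) :
    ∫ x, u x * v x ∂μ ≤ Real.sqrt (∫ x, u x ^ 2 ∂μ) * Real.sqrt (∫ x, v x ^ 2 ∂μ) := by
  have hpq : Real.HolderConjugate 2 2 := Real.holderConjugate_iff.mpr ⟨one_lt_two, by norm_num⟩
  have hmu : MemLp u (ENNReal.ofReal 2) μ := by
    rw [show ENNReal.ofReal 2 = 2 by norm_num]
    exact (memLp_two_iff_integrable_sq hu).2 hu2
  have hmv : MemLp v (ENNReal.ofReal 2) μ := by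
    rw [show ENNReal.ofReal 2 = 2 by norm_num]
    exact (memLp_two_iff_integrable_sq hv).2 hv2
  have huv : Integrable (fun x => u x * v x) μ := by
    refine Integrable.mono ((hu2.add hv2).div_const 2) ((hu.mul hv)) ?_
    filter_upwards with x
    simp only [Pi.add_apply, Real.norm_eq_abs, abs_mul, abs_div, abs_two]
    rw [abs_of_nonneg (by positivity : (0:ℝ) ≤ u x ^ 2 + v x ^ 2)]
    nlinarith [sq_abs (u x), sq_abs (v x), abs_nonneg (u x), abs_nonneg (v x),
      sq_nonneg (|u x| - |v x|)]
  have h1 : ∫ x, u x * v x ∂μ ≤ ∫ x, ‖u x‖ * ‖v x‖ ∂μ := by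
    refine integral_mono huv ?_ fun x => ?_
    · simpa [abs_mul] using huv.abs
    · simp only [Real.norm_eq_abs, ← abs_mul]
      exact le_abs_self _
  refine h1.trans ?_
  have h2 := MeasureTheory.integral_mul_norm_le_Lp_mul_Lq hpq hmu hmv
  have eu : ∫ a, ‖u a‖ ^ (2:ℝ) ∂μ = ∫ x, u x ^ 2 ∂μ := by
    refine integral_congr_ae (Filter.Eventually.of_forall fun y => ?_)
    show ‖u y‖ ^ (2:ℝ) = u y ^ 2
    rw [Real.rpow_two, Real.norm_eq_abs, sq_abs]
  have ev : ∫ a, ‖v a‖ ^ (2:ℝ) ∂μ = ∫ x, v x ^ 2 ∂μ := by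
    refine integral_congr_ae (Filter.Eventually.of_forall fun y => ?_)
    show ‖v y‖ ^ (2:ℝ) = v y ^ 2
    rw [Real.rpow_two, Real.norm_eq_abs, sq_abs]
  rw [eu, ev] at h2
  refine h2.trans ?_
  rw [Real.sqrt_eq_rpow, Real.sqrt_eq_rpow]

/-- Fisher IPM at full capacity equals the symmetric chi-squared distance. -/
theorem fisher_ipm_full_capacity_eq_chi_squared
    {X : Type*} [MeasurableSpace X] (μ : Measure X) (p q : X → ℝ)
    (hp : Measurable p) (hq : Measurable q)
    (hp0 : ∀ x, 0 ≤ p x) (hq0 : ∀ x, 0 ≤ q x)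
    (hp1 : ∫ x, p x ∂μ = 1) (hq1 : ∫ x, q x ∂μ = 1)
    (hpq : ¬ (p =ᵐ[μ] q))
    (hchi : Integrable (fun x => (p x - q x) ^ 2 / ((p x + q x) / 2)) μ) :
    sSup {r : ℝ | ∃ f : X → ℝ, Measurable f ∧
        Integrable (fun x => f x ^ 2 * ((p x + q x) / 2)) μ ∧
        0 < ∫ x, f x ^ 2 * ((p x + q x) / 2) ∂μ ∧
        r = (∫ x, f x * p x ∂μ - ∫ x, f x * q x ∂μ) /
            Real.sqrt ((1 / 2) * ∫ x, f x ^ 2 * p x ∂μ +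
                       (1 / 2) * ∫ x, f x ^ 2 * q x ∂μ)} =
      Real.sqrt (∫ x, (p x - q x) ^ 2 / ((p x + q x) / 2) ∂μ) := by
  set m : X → ℝ := fun x => (p x + q x) / 2 with hm_def
  have hm0 : ∀ x, 0 ≤ m x := fun x => by
    have := hp0 x; have := hq0 x; simp only [hm_def]; positivity
  have hm_meas : Measurable m := (hp.add hq).div_const 2
  -- p and q are integrable
  have hp_int : Integrable p μ := by
    by_contra h; rw [integral_undef h] at hp1; norm_num at hp1
  have hq_int : Integrable q μ := by
    by_contra h; rw [integral_undef h] at hq1; norm_num at hq1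
  have hm_int : Integrable m μ := (hp_int.add hq_int).div_const 2
  set C : ℝ := ∫ x, (p x - q x) ^ 2 / ((p x + q x) / 2) ∂μ with hC_def
  have hC0 : 0 ≤ C := integral_nonneg fun x => by
    have := hm0 x; positivity
  -- C is positive
  have hCpos : 0 < C := by
    rcases hC0.lt_or_eq with h | h; · exact h
    exfalso
    apply hpq
    have hz : (fun x => (p x - q x) ^ 2 / ((p x + q x) / 2)) =ᵐ[μ] 0 := by
      refine (integral_eq_zero_iff_of_nonneg (fun x => by have := hm0 x; positivity) hchi).1 h.symm
    filter_upwards [hz] with x hx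
    simp only [Pi.zero_apply] at hx
    rcases div_eq_zero_iff.1 hx with h1 | h1
    · have := pow_eq_zero_iff (n := 2) (by norm_num) |>.1 h1
      linarith [sub_eq_zero.1 this]
    · have hpx := hp0 x; have hqx := hq0 x
      have : p x + q x = 0 := by linarith
      have hpz : p x = 0 := by linarith
      have hqz : q x = 0 := by linarith
      rw [hpz, hqz]
  -- generic facts for any f with Integrable f^2 * m
  have key : ∀ f : X → ℝ, Measurable f → Integrable (fun x => f x ^ 2 * m x) μ →
      Integrable (fun x => f x * p x) μ ∧ Integrable (fun x => f x * q x) μ ∧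
      ((1 / 2) * ∫ x, f x ^ 2 * p x ∂μ + (1 / 2) * ∫ x, f x ^ 2 * q x ∂μ
        = ∫ x, f x ^ 2 * m x ∂μ) ∧
      (∫ x, f x * p x ∂μ - ∫ x, f x * q x ∂μ = ∫ x, f x * (p x - q x) ∂μ) := by
    intro f hf hf2m
    have habsfm : Integrable (fun x => |f x| * m x) μ := by
      refine Integrable.mono ((hf2m.add hm_int).div_const 2)
        (hf.abs.mul hm_meas).aestronglyMeasurable ?_
      filter_upwards with x
      simp only [Pi.add_apply, Real.norm_eq_abs, abs_mul, abs_abs, abs_div, abs_two]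
      rw [abs_of_nonneg (hm0 x),
        abs_of_nonneg (by have := hm0 x; positivity : (0:ℝ) ≤ f x ^ 2 * m x + m x)]
      nlinarith [sq_abs (f x), sq_nonneg (|f x| - 1), hm0 x, abs_nonneg (f x)]
    have hfp : Integrable (fun x => f x * p x) μ := by
      refine Integrable.mono (habsfm.const_mul 2) (hf.mul hp).aestronglyMeasurable ?_
      filter_upwards with x
      simp only [Real.norm_eq_abs, abs_mul, abs_abs, abs_two]
      rw [abs_of_nonneg (hp0 x), abs_of_nonneg (hm0 x)]
      have h2m : p x ≤ 2 * m x := by simp only [hm_def]; nlinarith [hq0 x]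
      nlinarith [abs_nonneg (f x), hp0 x]
    have hfq : Integrable (fun x => f x * q x) μ := by
      refine Integrable.mono (habsfm.const_mul 2) (hf.mul hq).aestronglyMeasurable ?_
      filter_upwards with x
      simp only [Real.norm_eq_abs, abs_mul, abs_abs, abs_two]
      rw [abs_of_nonneg (hq0 x), abs_of_nonneg (hm0 x)]
      have h2m : q x ≤ 2 * m x := by simp only [hm_def]; nlinarith [hp0 x]
      nlinarith [abs_nonneg (f x), hq0 x]
    have hf2p : Integrable (fun x => f x ^ 2 * p x) μ := by
      refine Integrable.mono (hf2m.const_mul 2) ((hf.pow_const 2).mul hp).aestronglyMeasurable ?_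
      filter_upwards with x
      simp only [Real.norm_eq_abs, abs_mul, abs_two]
      rw [abs_of_nonneg (hp0 x), abs_of_nonneg (sq_nonneg (f x)),
        abs_of_nonneg (hm0 x)]
      have h2m : p x ≤ 2 * m x := by simp only [hm_def]; nlinarith [hq0 x]
      nlinarith [sq_nonneg (f x), hp0 x]
    have hf2q : Integrable (fun x => f x ^ 2 * q x) μ := by
      refine Integrable.mono (hf2m.const_mul 2) ((hf.pow_const 2).mul hq).aestronglyMeasurable ?_
      filter_upwards with x
      simp only [Real.norm_eq_abs, abs_mul, abs_two]
      rw [abs_of_nonneg (hq0 x), abs_of_nonneg (sq_nonneg (f x)),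
        abs_of_nonneg (hm0 x)]
      have h2m : q x ≤ 2 * m x := by simp only [hm_def]; nlinarith [hp0 x]
      nlinarith [sq_nonneg (f x), hq0 x]
    refine ⟨hfp, hfq, ?_, ?_⟩
    · have : ∫ x, f x ^ 2 * m x ∂μ
          = ∫ x, ((1/2) * (f x ^ 2 * p x) + (1/2) * (f x ^ 2 * q x)) ∂μ := by
        refine integral_congr_ae (Filter.Eventually.of_forall fun x => ?_)
        simp only [hm_def]; ring
      rw [this, integral_add (hf2p.const_mul _) (hf2q.const_mul _),
        integral_const_mul, integral_const_mul]
    · rw [← integral_sub hfp hfq]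
      refine integral_congr_ae (Filter.Eventually.of_forall fun x => ?_)
      ring
  -- the optimal witness
  set g : X → ℝ := fun x => (p x - q x) / m x with hg_def
  have hg_meas : Measurable g := (hp.sub hq).div hm_meas
  have hg2m : ∀ x, g x ^ 2 * m x = (p x - q x) ^ 2 / ((p x + q x) / 2) := by
    intro x
    show g x ^ 2 * m x = (p x - q x) ^ 2 / m x
    rcases eq_or_ne (m x) 0 with h | h
    · simp [hg_def, h]
    · simp only [hg_def]
      rw [div_pow, div_mul_eq_mul_div, pow_two (m x), mul_div_mul_right _ _ h]
  have hgm : ∀ x, g x * (p x - q x) = (p x - q x) ^ 2 / ((p x + q x) / 2) := by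
    intro x
    simp only [hg_def, hm_def]
    rw [div_mul_eq_mul_div, sq]
  have hg2m_int : Integrable (fun x => g x ^ 2 * m x) μ := by
    refine hchi.congr (Filter.Eventually.of_forall fun x => (hg2m x).symm)
  have hg2m_val : ∫ x, g x ^ 2 * m x ∂μ = C := by
    refine integral_congr_ae (Filter.Eventually.of_forall fun x => hg2m x)
  obtain ⟨hgp, hgq, hgden, hgnum⟩ := key g hg_meas hg2m_int
  have hg_num_val : ∫ x, g x * p x ∂μ - ∫ x, g x * q x ∂μ = C := by
    rw [hgnum]
    exact integral_congr_ae (Filter.Eventually.of_forall fun x => hgm x)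
  have hmem : Real.sqrt C ∈ {r : ℝ | ∃ f : X → ℝ, Measurable f ∧
        Integrable (fun x => f x ^ 2 * ((p x + q x) / 2)) μ ∧
        0 < ∫ x, f x ^ 2 * ((p x + q x) / 2) ∂μ ∧
        r = (∫ x, f x * p x ∂μ - ∫ x, f x * q x ∂μ) /
            Real.sqrt ((1 / 2) * ∫ x, f x ^ 2 * p x ∂μ +
                       (1 / 2) * ∫ x, f x ^ 2 * q x ∂μ)} := by
    refine ⟨g, hg_meas, hg2m_int, by rw [hg2m_val]; exact hCpos, ?_⟩
    rw [hg_num_val, hgden, hg2m_val, Real.div_sqrt]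
  -- upper bound
  have hub : ∀ r ∈ {r : ℝ | ∃ f : X → ℝ, Measurable f ∧
        Integrable (fun x => f x ^ 2 * ((p x + q x) / 2)) μ ∧
        0 < ∫ x, f x ^ 2 * ((p x + q x) / 2) ∂μ ∧
        r = (∫ x, f x * p x ∂μ - ∫ x, f x * q x ∂μ) /
            Real.sqrt ((1 / 2) * ∫ x, f x ^ 2 * p x ∂μ +
                       (1 / 2) * ∫ x, f x ^ 2 * q x ∂μ)}, r ≤ Real.sqrt C := by
    rintro r ⟨f, hf, hf2m, hfpos, rfl⟩
    obtain ⟨hfp, hfq, hfden, hfnum⟩ := key f hf hf2m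
    set u : X → ℝ := fun x => f x * Real.sqrt (m x) with hu_def
    set v : X → ℝ := fun x => g x * Real.sqrt (m x) with hv_def
    have hu2 : ∀ x, u x ^ 2 = f x ^ 2 * m x := fun x => by
      simp only [hu_def, mul_pow, Real.sq_sqrt (hm0 x)]
    have hv2 : ∀ x, v x ^ 2 = (p x - q x) ^ 2 / ((p x + q x) / 2) := fun x => by
      simp only [hv_def, mul_pow, Real.sq_sqrt (hm0 x)]
      exact hg2m x
    have huv : ∀ x, u x * v x = f x * (p x - q x) := by
      intro x
      rcases eq_or_ne (m x) 0 with h | h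
      · have hpx := hp0 x; have hqx := hq0 x
        have hsum : p x + q x = 0 := by
          have : (p x + q x) / 2 = 0 := h
          linarith
        have hpz : p x = 0 := by linarith
        have hqz : q x = 0 := by linarith
        simp only [hu_def, hv_def, h, hpz, hqz]
        simp
      · have hs : Real.sqrt (m x) * Real.sqrt (m x) = m x := Real.mul_self_sqrt (hm0 x)
        show f x * Real.sqrt (m x) * ((p x - q x) / m x * Real.sqrt (m x))
            = f x * (p x - q x)
        rw [show f x * Real.sqrt (m x) * ((p x - q x) / m x * Real.sqrt (m x))
            = f x * (p x - q x) * (Real.sqrt (m x) * Real.sqrt (m x)) / m x by ring,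
          hs, mul_div_assoc, div_self h, mul_one]
    have hu2_int : Integrable (fun x => u x ^ 2) μ :=
      hf2m.congr (Filter.Eventually.of_forall fun x => (hu2 x).symm)
    have hv2_int : Integrable (fun x => v x ^ 2) μ :=
      hchi.congr (Filter.Eventually.of_forall fun x => (hv2 x).symm)
    have hcs := my_integral_cs μ u v
      ((hf.mul (hm_meas.sqrt)).aestronglyMeasurable)
      ((hg_meas.mul (hm_meas.sqrt)).aestronglyMeasurable)
      hu2_int hv2_int
    have hu2_val : ∫ x, u x ^ 2 ∂μ = ∫ x, f x ^ 2 * m x ∂μ :=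
      integral_congr_ae (Filter.Eventually.of_forall fun x => hu2 x)
    have hv2_val : ∫ x, v x ^ 2 ∂μ = C :=
      integral_congr_ae (Filter.Eventually.of_forall fun x => hv2 x)
    have huv_val : ∫ x, u x * v x ∂μ = ∫ x, f x * (p x - q x) ∂μ :=
      integral_congr_ae (Filter.Eventually.of_forall fun x => huv x)
    rw [hu2_val, hv2_val, huv_val] at hcs
    rw [hfnum, hfden]
    set S : ℝ := ∫ x, f x ^ 2 * m x ∂μ
    have hSpos : 0 < S := hfpos
    have hsqS : 0 < Real.sqrt S := Real.sqrt_pos.2 hSpos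
    rw [div_le_iff₀ hsqS]
    calc ∫ x, f x * (p x - q x) ∂μ ≤ Real.sqrt S * Real.sqrt C := hcs
      _ = Real.sqrt C * Real.sqrt S := mul_comm _ _
  exact le_antisymm (csSup_le ⟨_, hmem⟩ hub) (le_csSup ⟨_, hub⟩ hmem)
end

section
/- The function f_chi(x) = (1/chi_2(P,Q)) * (P(x)-Q(x)) / ((P(x)+Q(x))/2) satisfies the unit second-moment constraint (1/2)E_P[f_chi^2] + (1/2)E_Q[f_chi^2] = 1 and achieves E_P[f_chi] - E_Q[f_chi] = chi_2(P,Q), i.e., f_chi is an optimal critic for the Fisher IPM at full capacity. -/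
open MeasureTheory

/-- The optimal critic `f_chi` satisfies the unit second-moment constraint and
achieves the chi-squared distance as its mean discrepancy. -/
theorem fisher_optimal_critic
    {X : Type*} [MeasurableSpace X] (μ : Measure X) (p q : X → ℝ)
    (hp : Measurable p) (hq : Measurable q)
    (hp0 : ∀ x, 0 ≤ p x) (hq0 : ∀ x, 0 ≤ q x)
    (hp1 : ∫ x, p x ∂μ = 1) (hq1 : ∫ x, q x ∂μ = 1)
    (hpq : ¬ (p =ᵐ[μ] q))
    (hpos : ∀ x, 0 < p x + q x)
    (chi2 : ℝ)
    (hchi2 : chi2 = Real.sqrt (∫ x, (p x - q x) ^ 2 / ((p x + q x) / 2) ∂μ))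
    (hchi2_pos : 0 < chi2)
    (hchi : Integrable (fun x => (p x - q x) ^ 2 / ((p x + q x) / 2)) μ)
    (fchi : X → ℝ)
    (hfchi : fchi = fun x => (1 / chi2) * ((p x - q x) / ((p x + q x) / 2)))
    (hint_p : Integrable (fun x => fchi x * p x) μ)
    (hint_q : Integrable (fun x => fchi x * q x) μ)
    (hint_p2 : Integrable (fun x => fchi x ^ 2 * p x) μ)
    (hint_q2 : Integrable (fun x => fchi x ^ 2 * q x) μ) :
    (1 / 2) * ∫ x, fchi x ^ 2 * p x ∂μ + (1 / 2) * ∫ x, fchi x ^ 2 * q x ∂μ = 1 ∧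
    ∫ x, fchi x * p x ∂μ - ∫ x, fchi x * q x ∂μ = chi2 := by
  set I := ∫ x, (p x - q x) ^ 2 / ((p x + q x) / 2) ∂μ with hIdef
  have hInn : 0 ≤ I := by
    apply integral_nonneg
    intro x
    exact div_nonneg (sq_nonneg _) (by linarith [hpos x])
  have hI : I = chi2 ^ 2 := by
    rw [hchi2, Real.sq_sqrt hInn]
  have hchi2ne : chi2 ≠ 0 := ne_of_gt hchi2_pos
  have key1 : ∀ x, (1 / 2 : ℝ) * (fchi x ^ 2 * p x) + (1 / 2) * (fchi x ^ 2 * q x)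
      = (1 / chi2 ^ 2) * ((p x - q x) ^ 2 / ((p x + q x) / 2)) := by
    intro x
    have hne : p x + q x ≠ 0 := ne_of_gt (hpos x)
    subst hfchi
    field_simp
  have key2 : ∀ x, fchi x * p x - fchi x * q x
      = (1 / chi2) * ((p x - q x) ^ 2 / ((p x + q x) / 2)) := by
    intro x
    have hne : p x + q x ≠ 0 := ne_of_gt (hpos x)
    subst hfchi
    field_simp
  constructor
  · have h1 : (1 / 2 : ℝ) * ∫ x, fchi x ^ 2 * p x ∂μ + (1 / 2) * ∫ x, fchi x ^ 2 * q x ∂μ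
        = ∫ x, (1 / 2 : ℝ) * (fchi x ^ 2 * p x) + (1 / 2) * (fchi x ^ 2 * q x) ∂μ := by
      rw [integral_add (hint_p2.const_mul _) (hint_q2.const_mul _),
        integral_const_mul, integral_const_mul]
    rw [h1, funext key1, integral_const_mul, ← hIdef, hI]
    field_simp
  · have h2 : (∫ x, fchi x * p x ∂μ) - ∫ x, fchi x * q x ∂μ
        = ∫ x, fchi x * p x - fchi x * q x ∂μ := (integral_sub hint_p hint_q).symm
    rw [h2, funext key2, integral_const_mul, ← hIdef, hI]
    field_simp
end

section
/- For unit-norm elements f and f_chi of L^2(X,(P+Q)/2), the relative approximation error identity holds: (chi_2(P,Q) - d_H(P,Q)) / chi_2(P,Q) = (1/2) · inf over f in H on the unit sphere of ‖f - f_chi‖^2 in L^2(X,(P+Q)/2). -/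
open MeasureTheory

/-- Relative approximation error identity:
`(chi2 - d_H)/chi2 = (1/2) · inf_{f ∈ H ∩ sphere} ‖f - f_chi‖²_{L²(X,(P+Q)/2)}`. -/
theorem fisher_relative_approximation_error
    {X : Type*} [MeasurableSpace X] (μ : Measure X) (p q : X → ℝ)
    (hp : Measurable p) (hq : Measurable q)
    (hp0 : ∀ x, 0 ≤ p x) (hq0 : ∀ x, 0 ≤ q x)
    (hp1 : ∫ x, p x ∂μ = 1) (hq1 : ∫ x, q x ∂μ = 1)
    (hpq : ¬ (p =ᵐ[μ] q))
    (hpos : ∀ x, 0 < p x + q x)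
    (chi2 : ℝ)
    (hchi2 : chi2 = Real.sqrt (∫ x, (p x - q x) ^ 2 / ((p x + q x) / 2) ∂μ))
    (hchi2_pos : 0 < chi2)
    (hchi : Integrable (fun x => (p x - q x) ^ 2 / ((p x + q x) / 2)) μ)
    (fchi : X → ℝ)
    (hfchi : fchi = fun x => (1 / chi2) * ((p x - q x) / ((p x + q x) / 2)))
    (hfchi_norm : ∫ x, fchi x ^ 2 * ((p x + q x) / 2) ∂μ = 1)
    (H : Set (X → ℝ)) (hH : ∀ f ∈ H, Measurable f)
    (hH_symm : ∀ f ∈ H, (fun x => - f x) ∈ H)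
    (hH_int : ∀ f ∈ H, Integrable (fun x => f x * p x) μ ∧
        Integrable (fun x => f x * q x) μ ∧
        Integrable (fun x => f x ^ 2 * ((p x + q x) / 2)) μ)
    (hH_ne : ∃ f ∈ H, ∫ x, f x ^ 2 * ((p x + q x) / 2) ∂μ = 1) :
    (chi2 - sSup {r : ℝ | ∃ f ∈ H, ∫ x, f x ^ 2 * ((p x + q x) / 2) ∂μ = 1 ∧
          r = ∫ x, f x * p x ∂μ - ∫ x, f x * q x ∂μ}) / chi2 =
      (1 / 2) * sInf {r : ℝ | ∃ f ∈ H, ∫ x, f x ^ 2 * ((p x + q x) / 2) ∂μ = 1 ∧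
          r = ∫ x, (f x - fchi x) ^ 2 * ((p x + q x) / 2) ∂μ} := by
  have hc0 : chi2 ≠ 0 := ne_of_gt hchi2_pos
  set S := {r : ℝ | ∃ f ∈ H, ∫ x, f x ^ 2 * ((p x + q x) / 2) ∂μ = 1 ∧
      r = ∫ x, f x * p x ∂μ - ∫ x, f x * q x ∂μ} with hS
  set U := {r : ℝ | ∃ f ∈ H, ∫ x, f x ^ 2 * ((p x + q x) / 2) ∂μ = 1 ∧
      r = ∫ x, (f x - fchi x) ^ 2 * ((p x + q x) / 2) ∂μ} with hU
  -- key pointwise-algebra + integral computation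
  have key : ∀ f ∈ H, (∫ x, f x ^ 2 * ((p x + q x) / 2) ∂μ = 1) →
      ∫ x, (f x - fchi x) ^ 2 * ((p x + q x) / 2) ∂μ
        = 2 - (2 / chi2) * (∫ x, f x * p x ∂μ - ∫ x, f x * q x ∂μ) := by
    intro f hf hfn
    obtain ⟨hip, hiq, hi2⟩ := hH_int f hf
    have hpt : ∀ x, (f x - fchi x) ^ 2 * ((p x + q x) / 2)
        = f x ^ 2 * ((p x + q x) / 2)
          - (2 / chi2) * (f x * p x - f x * q x)
          + fchi x ^ 2 * ((p x + q x) / 2) := by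
      intro x
      have hx : p x + q x ≠ 0 := ne_of_gt (hpos x)
      rw [hfchi]
      field_simp
      ring
    have Ifchi : Integrable (fun x => fchi x ^ 2 * ((p x + q x) / 2)) μ := by
      have hpt2 : ∀ x, fchi x ^ 2 * ((p x + q x) / 2)
          = (1 / chi2) ^ 2 * ((p x - q x) ^ 2 / ((p x + q x) / 2)) := by
        intro x
        have hx : p x + q x ≠ 0 := ne_of_gt (hpos x)
        rw [hfchi]
        field_simp
      simpa only [hpt2] using hchi.const_mul ((1 / chi2) ^ 2)
    have Icross : Integrable (fun x => (2 / chi2) * (f x * p x - f x * q x)) μ :=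
      (hip.sub hiq).const_mul _
    calc ∫ x, (f x - fchi x) ^ 2 * ((p x + q x) / 2) ∂μ
        = ∫ x, (f x ^ 2 * ((p x + q x) / 2)
            - (2 / chi2) * (f x * p x - f x * q x)
            + fchi x ^ 2 * ((p x + q x) / 2)) ∂μ := by
          exact integral_congr_ae (Filter.Eventually.of_forall hpt)
      _ = (∫ x, (f x ^ 2 * ((p x + q x) / 2)
            - (2 / chi2) * (f x * p x - f x * q x)) ∂μ)
            + ∫ x, fchi x ^ 2 * ((p x + q x) / 2) ∂μ :=
          integral_add (hi2.sub Icross) Ifchi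
      _ = (∫ x, f x ^ 2 * ((p x + q x) / 2) ∂μ)
            - (∫ x, (2 / chi2) * (f x * p x - f x * q x) ∂μ)
            + ∫ x, fchi x ^ 2 * ((p x + q x) / 2) ∂μ := by
          rw [integral_sub hi2 Icross]
      _ = 1 - (2 / chi2) * (∫ x, f x * p x ∂μ - ∫ x, f x * q x ∂μ) + 1 := by
          rw [hfn, hfchi_norm, integral_const_mul, integral_sub hip hiq]
      _ = 2 - (2 / chi2) * (∫ x, f x * p x ∂μ - ∫ x, f x * q x ∂μ) := by ring
  -- nonnegativity gives the upper bound chi2 on S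
  have hSbdd : BddAbove S := by
    refine ⟨chi2, ?_⟩
    rintro r ⟨f, hf, hfn, rfl⟩
    have h0 : 0 ≤ ∫ x, (f x - fchi x) ^ 2 * ((p x + q x) / 2) ∂μ := by
      apply integral_nonneg
      intro x
      have := (hpos x).le
      positivity
    rw [key f hf hfn] at h0
    set r := ∫ x, f x * p x ∂μ - ∫ x, f x * q x ∂μ with hr
    have he : (2 / chi2) * r = 2 * (r / chi2) := by ring
    have h3 : r / chi2 ≤ 1 := by linarith [he ▸ h0]
    exact (div_le_one hchi2_pos).mp h3
  have hSne : S.Nonempty := by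
    obtain ⟨f, hf, hfn⟩ := hH_ne
    exact ⟨_, f, hf, hfn, rfl⟩
  -- U is the image of S under the antitone affine map
  have hUS : U = (fun t => 2 - (2 / chi2) * t) '' S := by
    ext u
    constructor
    · rintro ⟨f, hf, hfn, rfl⟩
      exact ⟨∫ x, f x * p x ∂μ - ∫ x, f x * q x ∂μ, ⟨f, hf, hfn, rfl⟩,
        (key f hf hfn).symm⟩
    · rintro ⟨t, ⟨f, hf, hfn, rfl⟩, rfl⟩
      exact ⟨f, hf, hfn, (key f hf hfn).symm⟩
  have hanti : Antitone (fun t : ℝ => 2 - (2 / chi2) * t) := by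
    intro a b hab
    have h2 : 0 ≤ 2 / chi2 := by positivity
    simp only
    nlinarith
  have hcont : ContinuousAt (fun t : ℝ => 2 - (2 / chi2) * t) (sSup S) := by
    fun_prop
  have hinf : sInf U = 2 - (2 / chi2) * sSup S := by
    rw [hUS]
    exact (hanti.map_csSup_of_continuousAt hcont hSne hSbdd).symm
  rw [hinf]
  field_simp
end

section
/- For the fixed feature map case, the local Rademacher complexity of the constrained linear class is bounded: E_σ sup over v with vᵀ(Σ_N + Σ_M + γI)v ≤ 2R of ⟨v, Σᵢ σᵢ Ỹᵢ Φ(Xᵢ)⟩ ≤ sqrt(2R·(M+N)/(MN)) · sqrt(d(γ)), where d(γ) = Tr((Σ_N + Σ_M + γI)⁻¹(Σ_N + Σ_M)) is the effective dimension. -/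
open Matrix

-- quadratic form of rank-one matrix
lemma qf_vecMulVec {m : ℕ} (p x : Fin m → ℝ) :
    x ⬝ᵥ (vecMulVec p p) *ᵥ x = (p ⬝ᵥ x) ^ 2 := by
  simp only [dotProduct, mulVec, vecMulVec_apply, sq]
  rw [Finset.sum_mul]
  congr 1; ext i
  rw [Finset.mul_sum, Finset.mul_sum]
  congr 1; ext j; ring

lemma trace_mul_vecMulVec {m : ℕ} (B : Matrix (Fin m) (Fin m) ℝ) (p : Fin m → ℝ) :
    (B * vecMulVec p p).trace = p ⬝ᵥ B *ᵥ p := by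
  simp only [trace, diag, mul_apply, vecMulVec_apply, dotProduct, mulVec]
  congr 1; ext i
  rw [Finset.mul_sum]
  congr 1; ext j; ring

lemma psd_vecMulVec {m : ℕ} (p : Fin m → ℝ) : (vecMulVec p p).PosSemidef := by
  refine PosSemidef.of_dotProduct_mulVec_nonneg ?_ ?_
  · ext i j
    simp [vecMulVec_apply, conjTranspose_apply, mul_comm]
  · intro x
    rw [star_trivial, qf_vecMulVec]
    positivity

lemma psd_smul_vmv {m : ℕ} (c : ℝ) (hc : 0 ≤ c) (p : Fin m → ℝ) :
    (c • vecMulVec p p).PosSemidef := by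
  have hp := psd_vecMulVec p
  refine PosSemidef.of_dotProduct_mulVec_nonneg ?_ ?_
  · show _ = _; rw [conjTranspose_smul, star_trivial, hp.1]
  · intro x
    rw [smul_mulVec, dotProduct_smul, smul_eq_mul]
    exact mul_nonneg hc (hp.dotProduct_mulVec_nonneg x)

lemma psd_smul_sum {m : ℕ} {ι : Type*} (c : ℝ) (hc : 0 ≤ c) (s : Finset ι)
    (f : ι → (Fin m → ℝ)) :
    (c • ∑ i ∈ s, vecMulVec (f i) (f i)).PosSemidef := by
  classical
  induction s using Finset.induction with
  | empty => simpa using (Matrix.PosSemidef.zero (n := Fin m) (R := ℝ))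
  | insert _ _ h ih =>
    rw [Finset.sum_insert h, smul_add]
    exact Matrix.PosSemidef.add (psd_smul_vmv c hc _) ih

-- Cauchy-Schwarz for PSD matrices
lemma cs_psd {m : ℕ} {A : Matrix (Fin m) (Fin m) ℝ} (hA : A.PosSemidef)
    (v u : Fin m → ℝ) :
    (v ⬝ᵥ A *ᵥ u) ^ 2 ≤ (v ⬝ᵥ A *ᵥ v) * (u ⬝ᵥ A *ᵥ u) := by
  open scoped MatrixOrder in obtain ⟨B, hB⟩ := CStarAlgebra.nonneg_iff_eq_star_mul_self.mp hA.nonneg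
  rw [star_eq_conjTranspose] at hB
  subst hB
  have key : ∀ x y : Fin m → ℝ, x ⬝ᵥ (Bᴴ * B) *ᵥ y = (B *ᵥ x) ⬝ᵥ (B *ᵥ y) := by
    intro x y
    have hBt : Bᴴ = Bᵀ := by ext i j; simp [conjTranspose_apply]
    rw [hBt, ← mulVec_mulVec, dotProduct_mulVec, vecMul_transpose]
  rw [key, key, key]
  have := Finset.sum_mul_sq_le_sq_mul_sq Finset.univ (B *ᵥ v) (B *ᵥ u)
  simpa [dotProduct, sq] using this

lemma sign_orth (n : ℕ) (i j : Fin n) (c : ℝ) :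
    ∑ ε : Fin n → Bool, ((if ε i then (1:ℝ) else -1) * (if ε j then (1:ℝ) else -1)) * c
      = (if i = j then (2:ℝ)^n else 0) * c := by
  rcases eq_or_ne i j with rfl | hij
  · simp only [if_pos rfl]
    have : ∀ ε : Fin n → Bool,
        ((if ε i then (1:ℝ) else -1) * (if ε i then (1:ℝ) else -1)) * c = c := by
      intro ε; rcases ε i <;> simp
    rw [Finset.sum_congr rfl (fun ε _ => this ε), Finset.sum_const]
    simp [Finset.card_univ, mul_comm]
  · rw [if_neg hij, zero_mul]
    set f : (Fin n → Bool) → ℝ := fun ε =>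
      ((if ε i then (1:ℝ) else -1) * (if ε j then (1:ℝ) else -1)) * c with hf
    have hinv : Function.Involutive (fun ε : Fin n → Bool => Function.update ε i (!(ε i))) := by
      intro ε
      simp [Function.update_idem]
    have hneg : ∀ ε, f (Function.update ε i (!(ε i))) = - f ε := by
      intro ε
      simp only [hf, Function.update_self, Function.update_of_ne (Ne.symm hij)]
      rcases ε i <;> rcases hj : ε j <;> simp [hj]
    have hsum : ∑ ε, f ε = ∑ ε, f (Function.update ε i (!(ε i))) :=
      (Fintype.sum_equiv hinv.toPerm (fun ε => f (Function.update ε i (!(ε i)))) f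
        (fun ε => rfl)).symm
    have : ∑ ε, f ε = - ∑ ε, f ε := by
      calc ∑ ε, f ε = ∑ ε, f (Function.update ε i (!(ε i))) := hsum
        _ = ∑ ε, - f ε := Finset.sum_congr rfl (fun ε _ => hneg ε)
        _ = - ∑ ε, f ε := Finset.sum_neg_distrib _
    linarith
lemma dp_sum_sum {m : ℕ} {ι : Type*} (s : Finset ι) (c d : ι → ℝ)
    (p q : ι → Fin m → ℝ) :
    (∑ i ∈ s, c i • p i) ⬝ᵥ (∑ j ∈ s, d j • q j)
      = ∑ i ∈ s, ∑ j ∈ s, c i * d j * (p i ⬝ᵥ q j) := by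
  simp only [dotProduct, Finset.sum_apply, Pi.smul_apply, smul_eq_mul,
    Finset.sum_mul, Finset.mul_sum]
  conv_rhs => rw [Finset.sum_comm]
  rw [Finset.sum_comm]
  refine Finset.sum_congr rfl fun j _ => ?_
  rw [Finset.sum_comm]
  refine Finset.sum_congr rfl fun i _ => ?_
  exact Finset.sum_congr rfl fun k _ => by ring

lemma sum_eps {n m : ℕ} (B : Matrix (Fin m) (Fin m) ℝ) (pts : Fin n → Fin m → ℝ)
    (Y : Fin n → ℝ) :
    ∑ ε : Fin n → Bool,
      (∑ i, ((if ε i then (1:ℝ) else -1) * Y i) • pts i) ⬝ᵥ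
        B *ᵥ (∑ i, ((if ε i then (1:ℝ) else -1) * Y i) • pts i)
    = 2^n * ∑ i, (Y i)^2 * (pts i ⬝ᵥ B *ᵥ pts i) := by
  have hmv : ∀ ε : Fin n → Bool,
      B *ᵥ (∑ i, ((if ε i then (1:ℝ) else -1) * Y i) • pts i)
        = ∑ i, ((if ε i then (1:ℝ) else -1) * Y i) • (B *ᵥ pts i) := by
    intro ε
    have := map_sum (B.mulVecLin)
      (fun i => ((if ε i then (1:ℝ) else -1) * Y i) • pts i) Finset.univ
    simpa only [mulVecLin_apply, _root_.map_smul] using this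
  calc ∑ ε : Fin n → Bool,
      (∑ i, ((if ε i then (1:ℝ) else -1) * Y i) • pts i) ⬝ᵥ
        B *ᵥ (∑ i, ((if ε i then (1:ℝ) else -1) * Y i) • pts i)
      = ∑ ε : Fin n → Bool, ∑ i, ∑ j,
          ((if ε i then (1:ℝ) else -1) * (if ε j then (1:ℝ) else -1)) *
            (Y i * Y j * (pts i ⬝ᵥ B *ᵥ pts j)) := by
        refine Finset.sum_congr rfl fun ε _ => ?_
        rw [hmv ε, dp_sum_sum]
        exact Finset.sum_congr rfl fun i _ => Finset.sum_congr rfl fun j _ => by ring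
    _ = ∑ i, ∑ j, ∑ ε : Fin n → Bool,
          ((if ε i then (1:ℝ) else -1) * (if ε j then (1:ℝ) else -1)) *
            (Y i * Y j * (pts i ⬝ᵥ B *ᵥ pts j)) := by
        rw [Finset.sum_comm]
        exact Finset.sum_congr rfl fun i _ => by rw [Finset.sum_comm]
    _ = ∑ i, ∑ j, (if i = j then (2:ℝ)^n else 0) *
          (Y i * Y j * (pts i ⬝ᵥ B *ᵥ pts j)) := by
        exact Finset.sum_congr rfl fun i _ => Finset.sum_congr rfl fun j _ =>
          sign_orth n i j _
    _ = ∑ i, (2:ℝ)^n * (Y i * Y i * (pts i ⬝ᵥ B *ᵥ pts i)) := by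
        refine Finset.sum_congr rfl fun i _ => ?_
        rw [Finset.sum_eq_single i]
        · simp
        · intro j _ hj; simp [Ne.symm hj, (fun h => hj h.symm : ¬ i = j)]
        · intro h; exact absurd (Finset.mem_univ i) h
    _ = 2^n * ∑ i, (Y i)^2 * (pts i ⬝ᵥ B *ᵥ pts i) := by
        rw [Finset.mul_sum]
        exact Finset.sum_congr rfl fun i _ => by ring

/-- Local Rademacher complexity bound for the constrained linear critic class with
a fixed feature map: it is bounded by `sqrt(2R(M+N)/(MN))·sqrt(d(γ))` where `d(γ)` is
the effective dimension. -/
theorem local_rademacher_linear_class_bound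
    (N M m : ℕ) (hN : 0 < N) (hM : 0 < M)
    (pts : Fin (N + M) → (Fin m → ℝ))
    (Y : Fin (N + M) → ℝ)
    (hY : Y = fun i : Fin (N + M) => if (i : ℕ) < N then (N : ℝ)⁻¹ else -(M : ℝ)⁻¹)
    (SigN SigM : Matrix (Fin m) (Fin m) ℝ)
    (hSigN : SigN = (N : ℝ)⁻¹ •
        ∑ i ∈ Finset.univ.filter (fun i : Fin (N + M) => (i : ℕ) < N),
          vecMulVec (pts i) (pts i))
    (hSigM : SigM = (M : ℝ)⁻¹ •
        ∑ i ∈ Finset.univ.filter (fun i : Fin (N + M) => ¬ (i : ℕ) < N),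
          vecMulVec (pts i) (pts i))
    (γ : ℝ) (hγ : 0 < γ) (R : ℝ) (hR : 0 < R) :
    (2 ^ (N + M) : ℝ)⁻¹ *
      ∑ ε : Fin (N + M) → Bool,
        sSup {r : ℝ | ∃ v : Fin m → ℝ,
          v ⬝ᵥ (SigN + SigM + γ • (1 : Matrix (Fin m) (Fin m) ℝ)).mulVec v ≤ 2 * R ∧
          r = v ⬝ᵥ (∑ i, ((if ε i then (1 : ℝ) else -1) * Y i) • pts i)} ≤
    Real.sqrt (2 * R * ((M : ℝ) + N) / ((M : ℝ) * N)) *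
      Real.sqrt (((SigN + SigM + γ • (1 : Matrix (Fin m) (Fin m) ℝ))⁻¹ *
        (SigN + SigM)).trace) := by
  classical
  have hNR : (0:ℝ) < N := by exact_mod_cast hN
  have hMR : (0:ℝ) < M := by exact_mod_cast hM
  set A := SigN + SigM + γ • (1 : Matrix (Fin m) (Fin m) ℝ) with hAdef
  have hSigN_psd : SigN.PosSemidef := by
    rw [hSigN]; exact psd_smul_sum _ (by positivity) _ _
  have hSigM_psd : SigM.PosSemidef := by
    rw [hSigM]; exact psd_smul_sum _ (by positivity) _ _
  have hγ1 : (γ • (1 : Matrix (Fin m) (Fin m) ℝ)).PosDef := by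
    rw [smul_one_eq_diagonal]
    exact (posDef_diagonal_iff).mpr fun _ => hγ
  have hA_pd : A.PosDef := Matrix.PosDef.posSemidef_add (hSigN_psd.add hSigM_psd) hγ1
  have hInv_pd : A⁻¹.PosDef := hA_pd.inv
  have hInv_psd : A⁻¹.PosSemidef := hInv_pd.posSemidef
  have hAAinv : A * A⁻¹ = 1 := Matrix.mul_nonsing_inv _ hA_pd.det_pos.ne'.isUnit
  set w : (Fin (N + M) → Bool) → (Fin m → ℝ) :=
    fun ε => ∑ i, ((if ε i then (1 : ℝ) else -1) * Y i) • pts i with hw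
  set q : (Fin (N + M) → Bool) → ℝ := fun ε => w ε ⬝ᵥ A⁻¹ *ᵥ w ε with hqdef
  have hq0 : ∀ ε, 0 ≤ q ε := fun ε => by
    simpa using hInv_psd.dotProduct_mulVec_nonneg (w ε)
  -- step 1 : each sSup is bounded
  have step1 : ∀ ε : Fin (N + M) → Bool,
      sSup {r : ℝ | ∃ v : Fin m → ℝ,
          v ⬝ᵥ A.mulVec v ≤ 2 * R ∧ r = v ⬝ᵥ w ε} ≤ Real.sqrt (2 * R * q ε) := by
    intro ε
    apply Real.sSup_le
    · rintro r ⟨v, hv, rfl⟩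
      have hu : A *ᵥ (A⁻¹ *ᵥ w ε) = w ε := by
        rw [mulVec_mulVec, hAAinv, one_mulVec]
      have hvv : 0 ≤ v ⬝ᵥ A *ᵥ v := by simpa using hA_pd.posSemidef.dotProduct_mulVec_nonneg v
      have huu : (A⁻¹ *ᵥ w ε) ⬝ᵥ A *ᵥ (A⁻¹ *ᵥ w ε) = q ε := by
        rw [hu, dotProduct_comm]
      have hcs := cs_psd hA_pd.posSemidef v (A⁻¹ *ᵥ w ε)
      rw [huu] at hcs
      have h2 : (v ⬝ᵥ A *ᵥ (A⁻¹ *ᵥ w ε)) ^ 2 ≤ 2 * R * q ε :=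
        hcs.trans (mul_le_mul_of_nonneg_right hv (hq0 ε))
      calc v ⬝ᵥ w ε = v ⬝ᵥ A *ᵥ (A⁻¹ *ᵥ w ε) := by rw [hu]
        _ ≤ |v ⬝ᵥ A *ᵥ (A⁻¹ *ᵥ w ε)| := le_abs_self _
        _ = Real.sqrt ((v ⬝ᵥ A *ᵥ (A⁻¹ *ᵥ w ε)) ^ 2) := (Real.sqrt_sq_eq_abs _).symm
        _ ≤ Real.sqrt (2 * R * q ε) := Real.sqrt_le_sqrt h2
    · exact Real.sqrt_nonneg _
  -- trace and S computations
  set t : Fin (N + M) → ℝ := fun i => pts i ⬝ᵥ A⁻¹ *ᵥ pts i with ht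
  have ht0 : ∀ i, 0 ≤ t i := fun i => by simpa using hInv_psd.dotProduct_mulVec_nonneg (pts i)
  set TN := ∑ i ∈ Finset.univ.filter (fun i : Fin (N + M) => (i : ℕ) < N), t i with hTN
  set TM := ∑ i ∈ Finset.univ.filter (fun i : Fin (N + M) => ¬ (i : ℕ) < N), t i with hTM
  have hTN0 : 0 ≤ TN := Finset.sum_nonneg fun i _ => ht0 i
  have hTM0 : 0 ≤ TM := Finset.sum_nonneg fun i _ => ht0 i
  have htr : (A⁻¹ * (SigN + SigM)).trace = (N:ℝ)⁻¹ * TN + (M:ℝ)⁻¹ * TM := by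
    rw [hSigN, hSigM, Matrix.mul_add, trace_add, Matrix.mul_smul, Matrix.mul_smul,
      trace_smul, trace_smul, Matrix.mul_sum, Matrix.mul_sum, trace_sum, trace_sum]
    simp only [trace_mul_vecMulVec, smul_eq_mul, hTN, hTM, ht]
  set S := ∑ i, (Y i)^2 * t i with hS
  have hS0 : 0 ≤ S := Finset.sum_nonneg fun i _ => mul_nonneg (sq_nonneg _) (ht0 i)
  have hSsplit : S = (N:ℝ)⁻¹^2 * TN + (M:ℝ)⁻¹^2 * TM := by
    rw [hS, ← Finset.sum_filter_add_sum_filter_not Finset.univ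
      (fun i : Fin (N+M) => (i:ℕ) < N) (fun i => (Y i)^2 * t i), hTN, hTM,
      Finset.mul_sum, Finset.mul_sum]
    congr 1
    · refine Finset.sum_congr rfl fun i hi => ?_
      rw [hY]
      simp only [if_pos (Finset.mem_filter.mp hi).2]
    · refine Finset.sum_congr rfl fun i hi => ?_
      rw [hY]
      simp only [if_neg (Finset.mem_filter.mp hi).2]
      ring
  have hq_sum : ∑ ε, q ε = 2^(N+M) * S := by
    simp only [hqdef, hw, hS, ht]
    exact sum_eps A⁻¹ pts Y
  -- Jensen / Cauchy-Schwarz over signs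
  have hsum_sqrt : ∑ ε, Real.sqrt (q ε) ≤ 2^(N+M) * Real.sqrt S := by
    have h1 : (∑ ε, Real.sqrt (q ε))^2 ≤ (2^(N+M):ℝ) * ∑ ε, q ε := by
      have h2 := sq_sum_le_card_mul_sum_sq (s := (Finset.univ : Finset (Fin (N+M) → Bool)))
        (f := fun ε => Real.sqrt (q ε))
      have h3 : ∀ ε : Fin (N+M) → Bool, Real.sqrt (q ε) ^ 2 = q ε :=
        fun ε => Real.sq_sqrt (hq0 ε)
      calc (∑ ε, Real.sqrt (q ε))^2
          ≤ ((Finset.univ : Finset (Fin (N+M) → Bool)).card : ℝ) *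
              ∑ ε, Real.sqrt (q ε) ^ 2 := h2
        _ = (2^(N+M):ℝ) * ∑ ε, q ε := by
            rw [Finset.sum_congr rfl fun ε _ => h3 ε]
            congr 1
            simp [Finset.card_univ]
    calc ∑ ε, Real.sqrt (q ε)
        = Real.sqrt ((∑ ε, Real.sqrt (q ε))^2) :=
          (Real.sqrt_sq (Finset.sum_nonneg fun ε _ => Real.sqrt_nonneg _)).symm
      _ ≤ Real.sqrt (((2:ℝ)^(N+M))^2 * S) := by
          apply Real.sqrt_le_sqrt
          rw [hq_sum] at h1
          calc (∑ ε, Real.sqrt (q ε))^2 ≤ (2^(N+M):ℝ) * (2^(N+M) * S) := h1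
            _ = ((2:ℝ)^(N+M))^2 * S := by ring
      _ = 2^(N+M) * Real.sqrt S := by
          rw [Real.sqrt_mul (by positivity), Real.sqrt_sq (by positivity)]
  -- effective dimension bound
  set c : ℝ := ((M:ℝ) + N) / ((M:ℝ) * N) with hc
  have hc_eq : c = (N:ℝ)⁻¹ + (M:ℝ)⁻¹ := by
    rw [hc, inv_add_inv (ne_of_gt hNR) (ne_of_gt hMR), add_comm (N:ℝ) M, mul_comm (N:ℝ) M]
  have hSle : S ≤ c * (A⁻¹ * (SigN + SigM)).trace := by
    rw [hSsplit, htr, hc_eq]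
    have h1 : 0 ≤ (N:ℝ)⁻¹ := by positivity
    have h2 : 0 ≤ (M:ℝ)⁻¹ := by positivity
    nlinarith [mul_nonneg (mul_nonneg h1 h2) hTN0, mul_nonneg (mul_nonneg h1 h2) hTM0]
  have htr0 : 0 ≤ (A⁻¹ * (SigN + SigM)).trace := by
    rw [htr]; positivity
  -- final chain
  calc (2 ^ (N + M) : ℝ)⁻¹ *
      ∑ ε : Fin (N + M) → Bool,
        sSup {r : ℝ | ∃ v : Fin m → ℝ,
          v ⬝ᵥ A.mulVec v ≤ 2 * R ∧ r = v ⬝ᵥ w ε}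
      ≤ (2 ^ (N + M) : ℝ)⁻¹ * ∑ ε, Real.sqrt (2 * R * q ε) := by
        apply mul_le_mul_of_nonneg_left (Finset.sum_le_sum fun ε _ => step1 ε) (by positivity)
    _ = (2 ^ (N + M) : ℝ)⁻¹ * (Real.sqrt (2 * R) * ∑ ε, Real.sqrt (q ε)) := by
        congr 1
        rw [Finset.mul_sum]
        exact Finset.sum_congr rfl fun ε _ => Real.sqrt_mul (by positivity) _
    _ ≤ (2 ^ (N + M) : ℝ)⁻¹ * (Real.sqrt (2 * R) * (2^(N+M) * Real.sqrt S)) := by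
        apply mul_le_mul_of_nonneg_left _ (by positivity)
        exact mul_le_mul_of_nonneg_left hsum_sqrt (Real.sqrt_nonneg _)
    _ = Real.sqrt (2 * R) * Real.sqrt S := by
        have : ((2:ℝ) ^ (N+M)) ≠ 0 := by positivity
        field_simp
    _ ≤ Real.sqrt (2 * R) * Real.sqrt (c * (A⁻¹ * (SigN + SigM)).trace) :=
        mul_le_mul_of_nonneg_left (Real.sqrt_le_sqrt hSle) (Real.sqrt_nonneg _)
    _ = Real.sqrt (2 * R * ((M : ℝ) + N) / ((M : ℝ) * N)) *
          Real.sqrt ((A⁻¹ * (SigN + SigM)).trace) := by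
        rw [Real.sqrt_mul (by positivity : (0:ℝ) ≤ c), ← mul_assoc,
          ← Real.sqrt_mul (by positivity : (0:ℝ) ≤ 2 * R), hc, mul_div_assoc]
end
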